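/- Let A be a 4-algebra and V a vector space. The set 𝒢 of pairs (r, α) with r : A → V linear and α an algebra automorphism of A, satisfying a▷x = α(a)▷x + r(a)·_V x and f(a,b) = f(α(a),α(b)) + α(a)▷r(b) + α(b)▷r(a) + r(a)·_V r(b) − r(a·b) for all a,b ∈ A, x ∈ V, is a group under (r,α)•(r',α') := (r' + r∘α', α∘α'), and it is a subgroup of the semidirect product Hom_k(A,V) ⋉ GL_k(A). -/
import Mathlib


structure FourAlgebra (k : Type*) (A : Type*) [Field k] [AddCommGroup A] [Module k A] where
  mul : A →ₗ[k] A →ₗ[k] A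
  comm : ∀ a b : A, mul a b = mul b a
  four : ∀ a : A, mul (mul a a) (mul a a) = 0

/-- The set 𝒢 of pairs (r, α), with α an algebra automorphism of A satisfying the two
compatibility equations, is a subgroup of the semidirect product Hom_k(A,V) ⋉ GL_k(A)
with multiplication (r,α)•(r',α') = (r' + r∘α', α∘α'): it contains the identity (0, id)
and is closed under this multiplication and under inverses. -/
theorem stmt15 (k A V : Type*) [Field k] [AddCommGroup A] [Module k A]
    [AddCommGroup V] [Module k V] (h2 : (2 : k) ≠ 0) (FA : FourAlgebra k A)
    (tr : A →ₗ[k] V →ₗ[k] V) (f : A →ₗ[k] A →ₗ[k] V) (mv : V →ₗ[k] V →ₗ[k] V)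
    -- (▷, f, ·_V) is a crossed system, i.e. V # A is a 4-algebra:
    (hcomm : ∀ z w : V × A,
      ((mv z.1 w.1 + tr z.2 w.1 + tr w.2 z.1 + f z.2 w.2, FA.mul z.2 w.2) : V × A)
        = (mv w.1 z.1 + tr w.2 z.1 + tr z.2 w.1 + f w.2 z.2, FA.mul w.2 z.2))
    (hfour : ∀ z : V × A,
      (fun u v : V × A =>
          ((mv u.1 v.1 + tr u.2 v.1 + tr v.2 u.1 + f u.2 v.2, FA.mul u.2 v.2) : V × A))
        ((fun u v : V × A =>
          ((mv u.1 v.1 + tr u.2 v.1 + tr v.2 u.1 + f u.2 v.2, FA.mul u.2 v.2) : V × A)) z z)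
        ((fun u v : V × A =>
          ((mv u.1 v.1 + tr u.2 v.1 + tr v.2 u.1 + f u.2 v.2, FA.mul u.2 v.2) : V × A)) z z)
        = 0) :
    let G : Set ((A →ₗ[k] V) × (A ≃ₗ[k] A)) := {q |
      (∀ a b : A, q.2 (FA.mul a b) = FA.mul (q.2 a) (q.2 b)) ∧
      (∀ (a : A) (x : V), tr a x = tr (q.2 a) x + mv (q.1 a) x) ∧
      (∀ a b : A, f a b = f (q.2 a) (q.2 b) + tr (q.2 a) (q.1 b) + tr (q.2 b) (q.1 a)
        + mv (q.1 a) (q.1 b) - q.1 (FA.mul a b))}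
    ((0 : A →ₗ[k] V), LinearEquiv.refl k A) ∈ G ∧
    (∀ q q' : (A →ₗ[k] V) × (A ≃ₗ[k] A), q ∈ G → q' ∈ G →
      ((q'.1 + q.1.comp (q'.2 : A →ₗ[k] A), q'.2.trans q.2) ∈ G)) ∧
    (∀ q : (A →ₗ[k] V) × (A ≃ₗ[k] A), q ∈ G →
      ((-(q.1.comp (q.2.symm : A →ₗ[k] A)), q.2.symm) ∈ G)) := by
  intro G
  have mvcomm : ∀ u v : V, mv u v = mv v u := by
    intro u v
    have h := congrArg Prod.fst (hcomm (u, (0:A)) (v, (0:A)))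
    simpa using h
  refine ⟨⟨fun a b => rfl, fun a x => by simp, fun a b => by simp⟩, ?_, ?_⟩
  · rintro q q' ⟨hm, ht, hf⟩ ⟨hm', ht', hf'⟩
    refine ⟨fun a b => by simp [hm', hm], ?_, ?_⟩
    · intro a x
      rw [ht' a x, ht (q'.2 a) x]
      simp only [LinearEquiv.trans_apply, LinearMap.add_apply, LinearMap.coe_comp,
        Function.comp_apply, LinearEquiv.coe_coe, map_add]
      abel
    · intro a b
      rw [hf' a b, hf (q'.2 a) (q'.2 b), ht (q'.2 a) (q'.1 b), ht (q'.2 b) (q'.1 a)]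
      simp only [LinearEquiv.trans_apply, LinearMap.add_apply, LinearMap.coe_comp,
        Function.comp_apply, LinearEquiv.coe_coe, map_add, hm']
      rw [mvcomm (q.1 (q'.2 b)) (q'.1 a)]
      abel
  · rintro q ⟨hm, ht, hf⟩
    have hminv : ∀ a b : A, q.2.symm (FA.mul a b) = FA.mul (q.2.symm a) (q.2.symm b) := by
      intro a b
      apply q.2.injective
      rw [hm]
      simp
    refine ⟨hminv, ?_, ?_⟩
    · intro a x
      have h := ht (q.2.symm a) x
      rw [q.2.apply_symm_apply] at h
      rw [h]
      simp only [LinearMap.neg_apply, LinearMap.coe_comp, Function.comp_apply,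
        LinearEquiv.coe_coe, map_neg]
      abel
    · intro a b
      have e := hf (q.2.symm a) (q.2.symm b)
      rw [q.2.apply_symm_apply, q.2.apply_symm_apply] at e
      have e3 := ht (q.2.symm a) (q.1 (q.2.symm b))
      rw [q.2.apply_symm_apply] at e3
      have e4 := ht (q.2.symm b) (q.1 (q.2.symm a))
      rw [q.2.apply_symm_apply] at e4
      rw [e]
      simp only [LinearMap.neg_apply, LinearMap.coe_comp, Function.comp_apply,
        LinearEquiv.coe_coe, map_neg, hminv, e3, e4]
      rw [mvcomm (q.1 (q.2.symm b)) (q.1 (q.2.symm a))]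
      abel
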